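/- Let n ≥ 2 be an integer. Set A_k = k(k−1)(k−2)(k−3)/8, B_k = k(k−1)(k−2)/6 and C(m,2) = m(m−1)/2. Then real numbers α, β, γ satisfy the system (i) α·C(n+2,2) − 2β·C(n+1,2) + γ·C(n,2) = 0, (ii) α·B_{n+2} − γ·B_{n+1} = 0, (iii) α·A_{n+2} − β·C(n+1,2)² + γ·(C(n+1,2)·C(n,2) − A_{n+1}) = 0, if and only if there exists ω ∈ ℝ with α = ω·n(n+1)(n−1), β = ω·(n−1)(n+2)(2n+1)/2, and γ = ω·n(n+1)(n+2). -/

import Mathlib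

/-- Lemma 3.2 (lem-solP): the linear system determining the coefficients of the
fully affine arc length element in ℝⁿ has the one-dimensional solution space
spanned by `(n(n+1)(n−1), (n−1)(n+2)(2n+1)/2, n(n+1)(n+2))`.
Here `A_k = k(k−1)(k−2)(k−3)/8`, `B_k = k(k−1)(k−2)/6`, `C(m,2) = m(m−1)/2`. -/
theorem arc_length_coefficient_system (n : ℕ) (hn : 2 ≤ n) (α β γ : ℝ) :
    (α * (((n : ℝ) + 2) * ((n : ℝ) + 1) / 2)
        - 2 * β * (((n : ℝ) + 1) * (n : ℝ) / 2)
        + γ * ((n : ℝ) * ((n : ℝ) - 1) / 2) = 0 ∧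
      α * (((n : ℝ) + 2) * ((n : ℝ) + 1) * (n : ℝ) / 6)
        - γ * (((n : ℝ) + 1) * (n : ℝ) * ((n : ℝ) - 1) / 6) = 0 ∧
      α * (((n : ℝ) + 2) * ((n : ℝ) + 1) * (n : ℝ) * ((n : ℝ) - 1) / 8)
        - β * (((n : ℝ) + 1) * (n : ℝ) / 2) ^ 2
        + γ * ((((n : ℝ) + 1) * (n : ℝ) / 2) * ((n : ℝ) * ((n : ℝ) - 1) / 2)
            - ((n : ℝ) + 1) * (n : ℝ) * ((n : ℝ) - 1) * ((n : ℝ) - 2) / 8) = 0)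
    ↔ ∃ ω : ℝ,
        α = ω * ((n : ℝ) * ((n : ℝ) + 1) * ((n : ℝ) - 1)) ∧
        β = ω * (((n : ℝ) - 1) * ((n : ℝ) + 2) * (2 * (n : ℝ) + 1) / 2) ∧
        γ = ω * ((n : ℝ) * ((n : ℝ) + 1) * ((n : ℝ) + 2)) := by
  have hN : (2:ℝ) ≤ (n:ℝ) := by exact_mod_cast hn
  have h0 : (n:ℝ) ≠ 0 := by linarith
  have h1 : (n:ℝ) + 1 ≠ 0 := by linarith
  have h2 : (n:ℝ) + 2 ≠ 0 := by linarith
  constructor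
  · rintro ⟨e1, e2, e3⟩
    have hag : ((n:ℝ)+1) * (n:ℝ) * (α * ((n:ℝ)+2)) = ((n:ℝ)+1) * (n:ℝ) * (γ * ((n:ℝ)-1)) := by
      linear_combination 6*e2
    have hag' := mul_left_cancel₀ (mul_ne_zero h1 h0) hag
    refine ⟨γ / ((n:ℝ) * ((n:ℝ)+1) * ((n:ℝ)+2)), ?_, ?_, ?_⟩
    · field_simp
      linear_combination hag'
    · field_simp
      linear_combination (-2)*e1 + ((n:ℝ)+1)*hag'
    · field_simp
  · rintro ⟨ω, rfl, rfl, rfl⟩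
    refine ⟨by ring, by ring, by ring⟩
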